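/- Let a : ℝ → ℝ be continuous with a(x) > 0 for all x, and let H : ℝ × ℝ → ℝ be continuous, coercive in p uniformly in x, and locally Lipschitz in p uniformly in x. Suppose m, M : ℝ → ℝ are bounded C¹ functions with m(x) < M(x) for all x, satisfying a(x)·m'(x) + H(m(x), x) > 0 > a(x)·M'(x) + H(M(x), x) for all x ∈ ℝ. Then there exists f ∈ C¹(ℝ) with a(x)·f'(x) + H(f(x), x) = 0 and m(x) < f(x) < M(x) for all x ∈ ℝ. -/

import Mathlib

open Set Filter

noncomputable def clampTo (c y : ℝ) : ℝ := max (-c) (min c y)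

lemma clampTo_abs_le {c : ℝ} (hc : 0 ≤ c) (y : ℝ) : |clampTo c y| ≤ c := by
  rw [abs_le]
  constructor
  · exact le_max_left _ _
  · exact max_le (by linarith) (min_le_left _ _)

lemma clampTo_eq {c y : ℝ} (h : |y| ≤ c) : clampTo c y = y := by
  rw [abs_le] at h
  unfold clampTo
  rw [min_eq_right h.2, max_eq_right h.1]

lemma clampTo_lip (c y y' : ℝ) : |clampTo c y - clampTo c y'| ≤ |y - y'| := by
  unfold clampTo
  calc |max (-c) (min c y) - max (-c) (min c y')|
      = |min c y ⊔ (-c) - min c y' ⊔ (-c)| := by rw [max_comm (-c), max_comm (-c)]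
    _ ≤ |min c y - min c y'| := abs_max_sub_max_le_abs _ _ _
    _ ≤ max |c - c| |y - y'| := abs_min_sub_min_le_max _ _ _ _
    _ ≤ |y - y'| := by simp

lemma clampTo_continuous (c : ℝ) : Continuous (clampTo c) :=
  continuous_const.max (continuous_const.min continuous_id)


/-- If `φ x = 0` and `φ' x < 0`, then arbitrarily close to the right of `x`, `φ < 0`. -/
lemma slope_right {φ : ℝ → ℝ} {d x : ℝ} (h : HasDerivAt φ d x) (h0 : φ x = 0)
    (hd : d < 0) {ε : ℝ} (hε : 0 < ε) : ∃ t, x < t ∧ t < x + ε ∧ φ t < 0 := by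
  have hs := hasDerivAt_iff_tendsto_slope.mp h
  have hs' : Tendsto (slope φ x) (nhdsWithin x (Ioi x)) (nhds d) :=
    hs.mono_left (nhdsWithin_mono x (fun t ht => by simpa using ne_of_gt ht))
  have hev : ∀ᶠ t in nhdsWithin x (Ioi x), slope φ x t < 0 :=
    hs' (Iio_mem_nhds hd)
  have hev2 : ∀ᶠ t in nhdsWithin x (Ioi x), t < x + ε :=
    eventually_nhdsWithin_of_eventually_nhds (Tendsto.eventually_lt_const (by linarith)
      tendsto_id)
  have hev3 : ∀ᶠ t in nhdsWithin x (Ioi x), x < t := eventually_mem_nhdsWithin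
  obtain ⟨t, h1, h2, h3⟩ := (hev.and (hev2.and hev3)).exists
  refine ⟨t, h3, h2, ?_⟩
  rw [slope_def_field, h0, sub_zero, div_lt_iff₀ (by linarith : (0:ℝ) < t - x)] at h1
  simpa using h1

/-- If `φ x = 0` and `φ' x < 0`, then arbitrarily close to the left of `x`, `φ > 0`. -/
lemma slope_left {φ : ℝ → ℝ} {d x : ℝ} (h : HasDerivAt φ d x) (h0 : φ x = 0)
    (hd : d < 0) {ε : ℝ} (hε : 0 < ε) : ∃ t, x - ε < t ∧ t < x ∧ 0 < φ t := by
  have hs := hasDerivAt_iff_tendsto_slope.mp h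
  have hs' : Tendsto (slope φ x) (nhdsWithin x (Iio x)) (nhds d) :=
    hs.mono_left (nhdsWithin_mono x (fun t ht => by simpa using ne_of_lt ht))
  have hev : ∀ᶠ t in nhdsWithin x (Iio x), slope φ x t < 0 :=
    hs' (Iio_mem_nhds hd)
  have hev2 : ∀ᶠ t in nhdsWithin x (Iio x), x - ε < t :=
    eventually_nhdsWithin_of_eventually_nhds (Tendsto.eventually_const_lt (by linarith)
      tendsto_id)
  have hev3 : ∀ᶠ t in nhdsWithin x (Iio x), t < x := eventually_mem_nhdsWithin
  obtain ⟨t, h1, h2, h3⟩ := (hev.and (hev2.and hev3)).exists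
  refine ⟨t, h2, h3, ?_⟩
  rw [slope_def_field, h0, sub_zero] at h1
  rcases div_neg_iff.mp h1 with ⟨h4,h5⟩ | ⟨h4,h5⟩
  · linarith
  · linarith



/-- If `φ' < 0` at every zero of `φ`, then nonnegativity propagates backward. -/
lemma back_nonneg {φ φ' : ℝ → ℝ} (hφ : ∀ x, HasDerivAt φ (φ' x) x)
    (hz : ∀ x, φ x = 0 → φ' x < 0) {x x0 : ℝ} (hx : x ≤ x0) (h0 : 0 ≤ φ x0) :
    0 ≤ φ x := by
  by_contra hneg
  push_neg at hneg
  have hxx0 : x < x0 := lt_of_le_of_ne hx (by rintro rfl; linarith)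
  have hcont : Continuous φ := by
    exact continuous_iff_continuousAt.mpr fun t => (hφ t).continuousAt
  set S : Set ℝ := {t | t ∈ Icc x x0 ∧ 0 ≤ φ t} with hS
  have hSclosed : IsClosed S := by
    have : S = Icc x x0 ∩ φ ⁻¹' (Ici 0) := by ext t; simp [hS, and_comm]
    rw [this]
    exact isClosed_Icc.inter (isClosed_Ici.preimage hcont)
  have hSne : S.Nonempty := ⟨x0, ⟨⟨hx, le_refl _⟩, h0⟩⟩
  have hSbdd : BddBelow S := ⟨x, fun t ht => ht.1.1⟩
  set x2 := sInf S with hx2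
  have hx2S : x2 ∈ S := hSclosed.csInf_mem hSne hSbdd
  have hx2lb : ∀ t ∈ S, x2 ≤ t := fun t ht => csInf_le hSbdd ht
  have hxx2 : x < x2 := by
    rcases eq_or_lt_of_le hx2S.1.1 with h | h
    · exfalso; rw [← h] at hx2S; linarith [hx2S.2]
    · exact h
  -- φ < 0 on [x, x2)
  have hbelow : ∀ t, x ≤ t → t < x2 → φ t < 0 := by
    intro t h1 h2
    by_contra hge
    push_neg at hge
    have : t ∈ S := ⟨⟨h1, le_trans (le_of_lt h2) hx2S.1.2⟩, hge⟩
    linarith [hx2lb t this]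
  -- φ x2 ≤ 0 by continuity from the left
  have hle0 : φ x2 ≤ 0 := by
    have hne : (nhdsWithin x2 (Iio x2)).NeBot := by
      exact nhdsLT_neBot x2
    have htend : Tendsto φ (nhdsWithin x2 (Iio x2)) (nhds (φ x2)) :=
      (hcont.continuousAt).continuousWithinAt.tendsto
    refine le_of_tendsto htend ?_
    filter_upwards [eventually_mem_nhdsWithin,
      eventually_nhdsWithin_of_eventually_nhds (Tendsto.eventually_const_lt hxx2 tendsto_id)]
      with t ht1 ht2
    exact le_of_lt (hbelow t (le_of_lt ht2) ht1)
  have h0' : φ x2 = 0 := le_antisymm hle0 hx2S.2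
  obtain ⟨t, ht1, ht2, ht3⟩ := slope_left (hφ x2) h0' (hz x2 h0') (show (0:ℝ) < x2 - x by linarith)
  have : φ t < 0 := hbelow t (by linarith) ht2
  linarith

lemma back_pos {φ φ' : ℝ → ℝ} (hφ : ∀ x, HasDerivAt φ (φ' x) x)
    (hz : ∀ x, φ x = 0 → φ' x < 0) {x x0 : ℝ} (hx : x ≤ x0) (h0 : 0 < φ x0) :
    0 < φ x := by
  rcases eq_or_lt_of_le hx with rfl | hlt
  · exact h0
  rcases lt_or_eq_of_le (back_nonneg hφ hz hx (le_of_lt h0)) with h | h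
  · exact h
  exfalso
  obtain ⟨t, ht1, ht2, ht3⟩ := slope_right (hφ x) h.symm (hz x h.symm)
    (show (0:ℝ) < x0 - x by linarith)
  have : 0 ≤ φ t := back_nonneg hφ hz (by linarith) (le_of_lt h0)
  linarith

/-- Lemma A.7, second alternative: a C¹ solution can be inserted between a strict
subsolution `m` and a strict supersolution `M` of the first-order ODE. -/
theorem stmt2
    (a : ℝ → ℝ) (ha_cont : Continuous a) (ha_pos : ∀ x, 0 < a x)
    (H : ℝ → ℝ → ℝ) (hH_cont : Continuous (fun q : ℝ × ℝ => H q.1 q.2))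
    (hH_coer : ∃ α β : ℝ → ℝ, Tendsto α atTop atTop ∧ Tendsto β atTop atTop ∧
      ∀ p x : ℝ, α |p| ≤ H p x ∧ H p x ≤ β |p|)
    (hH_lip : ∀ R > (0 : ℝ), ∃ C : ℝ, ∀ p ∈ Icc (-R) R, ∀ q ∈ Icc (-R) R, ∀ x : ℝ,
      |H p x - H q x| ≤ C * |p - q|)
    (m M m' M' : ℝ → ℝ)
    (hm : ∀ x, HasDerivAt m (m' x) x) (hM : ∀ x, HasDerivAt M (M' x) x)
    (hm'c : Continuous m') (hM'c : Continuous M')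
    (hmb : ∃ B, ∀ x, |m x| ≤ B) (hMb : ∃ B, ∀ x, |M x| ≤ B)
    (hmM : ∀ x, m x < M x)
    (hsub : ∀ x, 0 < a x * m' x + H (m x) x)
    (hsup : ∀ x, a x * M' x + H (M x) x < 0) :
    ∃ f f' : ℝ → ℝ, (∀ x, HasDerivAt f (f' x) x) ∧ Continuous f' ∧
      (∀ x, a x * f' x + H (f x) x = 0) ∧ ∀ x, m x < f x ∧ f x < M x := by

  obtain ⟨Bm, hBm⟩ := hmb
  obtain ⟨BM, hBM⟩ := hMb
  set B' : ℝ := max Bm BM + 1 with hB'def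
  have hBm' : ∀ x, |m x| ≤ B' - 1 := fun x => by
    rw [hB'def]; simpa using le_trans (hBm x) (le_max_left _ _)
  have hBM' : ∀ x, |M x| ≤ B' - 1 := fun x => by
    rw [hB'def]; simpa using le_trans (hBM x) (le_max_right _ _)
  have hB' : 0 < B' := by
    have := le_trans (abs_nonneg (m 0)) (hBm' 0)
    linarith
  obtain ⟨α, β, hα, hβ, hco⟩ := hH_coer
  obtain ⟨C, hC⟩ := hH_lip B' hB'
  set G : ℝ → ℝ → ℝ := fun x y => -(H (clampTo B' y) x) / a x with hGdef
  have hG_cont : Continuous fun q : ℝ × ℝ => G q.1 q.2 := by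
    apply Continuous.div
    · exact (hH_cont.comp (((clampTo_continuous B').comp continuous_snd).prodMk
        continuous_fst)).neg
    · exact ha_cont.comp continuous_fst
    · exact fun q => ne_of_gt (ha_pos q.1)
  have hclmem : ∀ y : ℝ, clampTo B' y ∈ Icc (-B') B' := fun y =>
    abs_le.mp (clampTo_abs_le (le_of_lt hB') y)
  have h0mem : (0:ℝ) ∈ Icc (-B') B' := by constructor <;> [linarith; linarith]
  have hH0 : ∀ x, |H 0 x| ≤ |α 0| + |β 0| := by
    intro x
    obtain ⟨h1, h2⟩ := hco 0 x
    simp only [abs_zero] at h1 h2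
    rw [abs_le]
    constructor
    · linarith [neg_abs_le (α 0), abs_nonneg (β 0)]
    · linarith [le_abs_self (β 0), abs_nonneg (α 0)]
  have hHnum : ∀ y x : ℝ, |H (clampTo B' y) x| ≤ |C| * B' + (|α 0| + |β 0|) := by
    intro y x
    have h1 : |H (clampTo B' y) x - H 0 x| ≤ C * |clampTo B' y - 0| :=
      hC _ (hclmem y) 0 h0mem x
    have h2 : C * |clampTo B' y - 0| ≤ |C| * B' := by
      rw [sub_zero]
      calc C * |clampTo B' y| ≤ |C| * |clampTo B' y| :=
            mul_le_mul_of_nonneg_right (le_abs_self C) (abs_nonneg _)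
        _ ≤ |C| * B' := mul_le_mul_of_nonneg_left (clampTo_abs_le (le_of_lt hB') y)
            (abs_nonneg _)
    calc |H (clampTo B' y) x| ≤ |H (clampTo B' y) x - H 0 x| + |H 0 x| := by
          linarith [abs_sub_abs_le_abs_sub (H (clampTo B' y) x) (H 0 x)]
      _ ≤ |C| * B' + (|α 0| + |β 0|) := add_le_add (h1.trans h2) (hH0 x)
  have bnd : ∀ T : ℝ, 0 < T → ∃ K C_T : ℝ, 0 ≤ K ∧ 0 ≤ C_T ∧
      (∀ t ∈ Icc (-T) T, ∀ y, |G t y| ≤ C_T) ∧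
      (∀ t ∈ Icc (-T) T, ∀ y y', |G t y - G t y'| ≤ K * |y - y'|) := by
    intro T hT
    obtain ⟨xm, hxmmem, hxmmin⟩ := isCompact_Icc.exists_isMinOn
      (nonempty_Icc.mpr (by linarith : -T ≤ T)) ha_cont.continuousOn
    have haT : 0 < a xm := ha_pos xm
    have haTle : ∀ t ∈ Icc (-T) T, a xm ≤ a t := fun t ht => hxmmin ht
    set N : ℝ := |C| * B' + (|α 0| + |β 0|) with hN
    have hN0 : 0 ≤ N := le_trans (abs_nonneg _) (hHnum 0 0)
    refine ⟨|C| / a xm, N / a xm, by positivity, by positivity, ?_, ?_⟩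
    · intro t ht y
      rw [hGdef]
      simp only
      rw [abs_div, abs_neg, abs_of_pos (ha_pos t)]
      exact div_le_div₀ hN0 (hHnum y t) haT (haTle t ht)
    · intro t ht y y'
      rw [hGdef]
      simp only
      rw [div_sub_div_same, abs_div, abs_of_pos (ha_pos t)]
      have hnum : |-H (clampTo B' y) t - -H (clampTo B' y') t| ≤ |C| * |y - y'| := by
        have h1 : |-H (clampTo B' y) t - -H (clampTo B' y') t|
            = |H (clampTo B' y') t - H (clampTo B' y) t| := by ring_nf
        rw [h1]
        calc |H (clampTo B' y') t - H (clampTo B' y) t|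
            ≤ C * |clampTo B' y' - clampTo B' y| := hC _ (hclmem y') _ (hclmem y) t
          _ ≤ |C| * |clampTo B' y' - clampTo B' y| :=
              mul_le_mul_of_nonneg_right (le_abs_self C) (abs_nonneg _)
          _ ≤ |C| * |y' - y| := mul_le_mul_of_nonneg_left (clampTo_lip _ _ _) (abs_nonneg _)
          _ = |C| * |y - y'| := by rw [abs_sub_comm]
      calc |-H (clampTo B' y) t - -H (clampTo B' y') t| / a t
          ≤ (|C| * |y - y'|) / a xm :=
            div_le_div₀ (by positivity) hnum haT (haTle t ht)
        _ = |C| / a xm * |y - y'| := by ring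
  have exist : ∀ T : ℝ, 0 < T → ∀ s : ℝ, ∃ gg : ℝ → ℝ, gg 0 = s ∧
      ∀ t ∈ Ioo (-T) T, HasDerivAt gg (G t (gg t)) t := by
    intro T hT s
    obtain ⟨K, C_T, hK0, hC0, hGb, hGl⟩ := bnd T hT
    have h0T : (0:ℝ) ∈ Icc (-T) T := ⟨by linarith, by linarith⟩
    have hpl : IsPicardLindelof G (tmin := -T) (tmax := T) ⟨0, h0T⟩ s (Real.toNNReal (C_T * T)) 0
        (Real.toNNReal C_T) (Real.toNNReal K) := {
      lipschitzOnWith := fun t ht => by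
        rw [lipschitzOnWith_iff_dist_le_mul]
        intro y _ y' _
        rw [Real.coe_toNNReal _ hK0, Real.dist_eq, Real.dist_eq]
        exact hGl t ht y y'
      continuousOn := fun y _ => (hG_cont.comp (continuous_id.prodMk continuous_const)).continuousOn
      norm_le := fun t ht y _ => by rw [Real.norm_eq_abs, Real.coe_toNNReal _ hC0]; exact hGb t ht y
      mul_max_le := by
        show (Real.toNNReal C_T : ℝ) * max (T - 0) (0 - -T) ≤ (Real.toNNReal (C_T * T) : ℝ) - ((0 : NNReal) : ℝ)
        rw [Real.coe_toNNReal _ hC0, Real.coe_toNNReal _ (by positivity)]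
        simp }
    obtain ⟨f, hf0, hf⟩ := hpl.exists_eq_forall_mem_Icc_hasDerivWithinAt₀
    exact ⟨f, hf0, fun t ht => (hf t (Ioo_subset_Icc_self ht)).hasDerivAt
      (Icc_mem_nhds ht.1 ht.2)⟩
  have uniq : ∀ T : ℝ, 0 < T → ∀ f1 f2 : ℝ → ℝ,
      (∀ t ∈ Ioo (-T) T, HasDerivAt f1 (G t (f1 t)) t) →
      (∀ t ∈ Ioo (-T) T, HasDerivAt f2 (G t (f2 t)) t) →
      f1 0 = f2 0 → ∀ t ∈ Ioo (-T) T, f1 t = f2 t := by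
    intro T hT f1 f2 h1 h2 h0
    obtain ⟨K, C_T, hK0, hC0, hGb, hGl⟩ := bnd T hT
    set v : ℝ → ℝ → ℝ := fun t y => G (clampTo T t) y with hv
    have hvG : ∀ t ∈ Ioo (-T) T, ∀ y : ℝ, v t y = G t y := by
      intro t ht y
      rw [hv]
      simp only
      rw [clampTo_eq (abs_le.mpr ⟨le_of_lt ht.1, le_of_lt ht.2⟩)]
    have hlip : ∀ t : ℝ, LipschitzOnWith (Real.toNNReal K) (v t) univ := by
      intro t
      rw [lipschitzOnWith_iff_dist_le_mul]
      intro y _ y' _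
      rw [Real.coe_toNNReal _ hK0, Real.dist_eq, Real.dist_eq]
      exact hGl (clampTo T t) (mem_Icc.mpr (abs_le.mp (clampTo_abs_le (le_of_lt hT) t))) y y'
    intro t ht
    refine ODE_solution_unique_of_mem_Ioo (fun t _ => hlip t)
      (show (0:ℝ) ∈ Ioo (-T) T from ⟨by linarith, hT⟩) ?_ ?_ h0 ht
    · exact fun u hu => ⟨by rw [hvG u hu]; exact h1 u hu, mem_univ _⟩
    · exact fun u hu => ⟨by rw [hvG u hu]; exact h2 u hu, mem_univ _⟩
  have gexists : ∀ s : ℝ, ∃ gg : ℝ → ℝ, gg 0 = s ∧ ∀ t, HasDerivAt gg (G t (gg t)) t := by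
    intro s
    have hex : ∀ n : ℕ, ∃ gg : ℝ → ℝ, gg 0 = s ∧
        ∀ t ∈ Ioo (-(n+1:ℝ)) (n+1), HasDerivAt gg (G t (gg t)) t :=
      fun n => exist (n+1) (by positivity) s
    choose gn hgn0 hgnd using hex
    have hcons : ∀ n k : ℕ, ∀ t : ℝ, |t| < n+1 → |t| < k+1 → gn n t = gn k t := by
      intro n k t hn hk
      set T : ℝ := min (n+1 : ℝ) (k+1) with hTdef
      have hT : (0:ℝ) < T := lt_min (by positivity) (by positivity)
      have hsub1 : Ioo (-T) T ⊆ Ioo (-(n+1:ℝ)) (n+1) :=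
        Ioo_subset_Ioo (neg_le_neg (min_le_left _ _)) (min_le_left _ _)
      have hsub2 : Ioo (-T) T ⊆ Ioo (-(k+1:ℝ)) (k+1) :=
        Ioo_subset_Ioo (neg_le_neg (min_le_right _ _)) (min_le_right _ _)
      refine uniq T hT _ _ (fun u hu => hgnd n u (hsub1 hu)) (fun u hu => hgnd k u (hsub2 hu))
        ((hgn0 n).trans (hgn0 k).symm) t ?_
      have : |t| < T := lt_min hn hk
      exact abs_lt.mp this
    refine ⟨fun t => gn ⌈|t|⌉₊ t, by simpa using hgn0 0, ?_⟩
    intro t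
    set N : ℕ := ⌈|t|⌉₊ + 1 with hNdef
    have htN : |t| < (N:ℝ) + 1 := by
      push_cast [hNdef]
      linarith [Nat.le_ceil |t|]
    have hev : (fun u => gn ⌈|u|⌉₊ u) =ᶠ[nhds t] gn N := by
      filter_upwards [Metric.ball_mem_nhds t zero_lt_one] with u hu
      have hu1 : |u| < (⌈|u|⌉₊ : ℝ) + 1 := by linarith [Nat.le_ceil |u|]
      have hu2 : |u| < (N:ℝ) + 1 := by
        rw [Metric.mem_ball, Real.dist_eq] at hu
        have : |u| ≤ |t| + |u - t| := by
          calc |u| = |t + (u - t)| := by ring_nf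
            _ ≤ |t| + |u - t| := abs_add_le _ _
        push_cast [hNdef]
        linarith [Nat.le_ceil |t|]
      exact hcons _ N u hu1 hu2
    have hd : HasDerivAt (gn N) (G t (gn N t)) t := hgnd N t (abs_lt.mp htN)
    have heq : gn ⌈|t|⌉₊ t = gn N t := by
      refine hcons _ N t ?_ htN
      linarith [Nat.le_ceil |t|]
    have goal : HasDerivAt (fun u => gn ⌈|u|⌉₊ u) (G t (gn N t)) t :=
      hd.congr_of_eventuallyEq hev
    simpa only [heq] using goal

  choose g hg0 hgd using gexists
  have hgc : ∀ s, Continuous (g s) :=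
    fun s => continuous_iff_continuousAt.mpr fun t => (hgd s t).continuousAt
  have hzm : ∀ s x, g s x - m x = 0 → G x (g s x) - m' x < 0 := by
    intro s x hx
    have hgm : g s x = m x := by linarith [sub_eq_zero.mp hx]
    rw [hgm, hGdef]
    simp only
    rw [clampTo_eq (le_trans (hBm' x) (by linarith))]
    have h := hsub x
    have ha' := ha_pos x
    have heq2 : -H (m x) x / a x - m' x = -((a x * m' x + H (m x) x) / a x) := by
      field_simp
      ring
    rw [heq2, neg_lt_zero]
    exact div_pos h ha'
  have hzM : ∀ s x, M x - g s x = 0 → M' x - G x (g s x) < 0 := by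
    intro s x hx
    have hgm : g s x = M x := by linarith [sub_eq_zero.mp hx]
    rw [hgm, hGdef]
    simp only
    rw [clampTo_eq (le_trans (hBM' x) (by linarith))]
    have h := hsup x
    have ha' := ha_pos x
    have heq2 : M' x - -H (M x) x / a x = (a x * M' x + H (M x) x) / a x := by
      field_simp
      ring
    rw [heq2]
    exact div_neg_of_neg_of_pos h ha'
  set Aset : Set ℝ := {s | ∃ x : ℝ, 0 ≤ x ∧ g s x < m x} with hAdef
  set Bset : Set ℝ := {s | ∃ x : ℝ, 0 ≤ x ∧ M x < g s x} with hBdef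
  have hdm : ∀ s x, HasDerivAt (fun u => g s u - m u) (G x (g s x) - m' x) x :=
    fun s x => (hgd s x).sub (hm x)
  have hdM : ∀ s x, HasDerivAt (fun u => M u - g s u) (M' x - G x (g s x)) x :=
    fun s x => (hM x).sub (hgd s x)
  have hdisj : ∀ s, s ∈ Aset → s ∈ Bset → False := by
    intro s hsA hsB
    obtain ⟨x1, hx1, h1⟩ := hsA
    obtain ⟨x2, hx2, h2⟩ := hsB
    rcases le_total x1 x2 with hcase | hcase
    · have hpos : 0 < g s x2 - m x2 := by linarith [hmM x2]
      have := back_pos (hdm s) (hzm s) hcase hpos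
      linarith
    · have hpos : 0 < M x1 - g s x1 := by linarith [hmM x1]
      have := back_pos (hdM s) (hzM s) hcase hpos
      linarith
  have hAmem : m 0 ∈ Aset := by
    have h0 : g (m 0) 0 - m 0 = 0 := by rw [hg0]; ring
    obtain ⟨t, ht1, ht2, ht3⟩ := slope_right (hdm (m 0) 0) h0 (hzm (m 0) 0 h0) zero_lt_one
    exact ⟨t, le_of_lt ht1, by linarith⟩
  have hBmem : M 0 ∈ Bset := by
    have h0 : M 0 - g (M 0) 0 = 0 := by rw [hg0]; ring
    obtain ⟨t, ht1, ht2, ht3⟩ := slope_right (hdM (M 0) 0) h0 (hzM (M 0) 0 h0) zero_lt_one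
    exact ⟨t, le_of_lt ht1, by linarith⟩
  have hopen : ∀ (P : Set ℝ), (∀ s, s ∈ P ↔ ∃ x : ℝ, 0 ≤ x ∧ g s x < m x) → True := fun _ _ => trivial
  have key_dep : ∀ (x1 : ℝ), 0 ≤ x1 → ∃ r : ℝ → ℝ, (∀ d, 0 < d → 0 < r d) ∧
      ∀ s s' d, 0 < d → |s' - s| < r d → |g s' x1 - g s x1| < d := by
    intro x1 hx1
    obtain ⟨K, C_T, hK0, hC0, hGb, hGl⟩ := bnd (x1 + 1) (by linarith)
    refine ⟨fun d => d / Real.exp (K * (x1 - 0)), fun d hd => by positivity, ?_⟩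
    intro s s' d hd hss
    set v : ℝ → ℝ → ℝ := fun t y => G (clampTo (x1+1) t) y with hvdef
    have hvG : ∀ t ∈ Ico (0:ℝ) x1, ∀ y : ℝ, v t y = G t y := by
      intro t ht y
      rw [hvdef]
      simp only
      rw [clampTo_eq (abs_le.mpr ⟨by linarith [ht.1], by linarith [ht.2]⟩)]
    have hlip : ∀ t : ℝ, LipschitzWith (Real.toNNReal K) (v t) := by
      intro t
      apply LipschitzWith.of_dist_le_mul
      intro y y'
      rw [Real.coe_toNNReal _ hK0, Real.dist_eq, Real.dist_eq]
      exact hGl (clampTo (x1+1) t)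
        (mem_Icc.mpr (abs_le.mp (clampTo_abs_le (by linarith) t))) y y'
    have hf' : ∀ s₀ : ℝ, ∀ t ∈ Ico (0:ℝ) x1, HasDerivWithinAt (g s₀) (v t (g s₀ t)) (Ici t) t := by
      intro s₀ t ht
      rw [hvG t ht]
      exact (hgd s₀ t).hasDerivWithinAt
    have hdis : dist (g s' 0) (g s 0) ≤ |s' - s| := by
      rw [hg0, hg0, Real.dist_eq]
    have := dist_le_of_trajectories_ODE hlip ((hgc s').continuousOn) (hf' s')
      ((hgc s).continuousOn) (hf' s) hdis x1 ⟨hx1, le_refl _⟩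
    rw [Real.coe_toNNReal _ hK0, Real.dist_eq] at this
    have hexp : 0 < Real.exp (K * (x1 - 0)) := Real.exp_pos _
    calc |g s' x1 - g s x1| ≤ |s' - s| * Real.exp (K * (x1 - 0)) := this
      _ < d / Real.exp (K * (x1 - 0)) * Real.exp (K * (x1 - 0)) := by
          exact mul_lt_mul_of_pos_right hss hexp
      _ = d := by field_simp
  have hAopen : IsOpen Aset := by
    rw [Metric.isOpen_iff]
    intro s hs
    obtain ⟨x1, hx1, hlt⟩ := hs
    obtain ⟨r, hr0, hr⟩ := key_dep x1 hx1
    refine ⟨r (m x1 - g s x1), hr0 _ (by linarith), ?_⟩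
    intro s' hs'
    rw [Metric.mem_ball, Real.dist_eq] at hs'
    have := hr s s' (m x1 - g s x1) (by linarith) hs'
    have h2 := abs_lt.mp this
    exact ⟨x1, hx1, by linarith [h2.2]⟩
  have hBopen : IsOpen Bset := by
    rw [Metric.isOpen_iff]
    intro s hs
    obtain ⟨x1, hx1, hlt⟩ := hs
    obtain ⟨r, hr0, hr⟩ := key_dep x1 hx1
    refine ⟨r (g s x1 - M x1), hr0 _ (by linarith), ?_⟩
    intro s' hs'
    rw [Metric.mem_ball, Real.dist_eq] at hs'
    have := hr s s' (g s x1 - M x1) (by linarith) hs'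
    have h2 := abs_lt.mp this
    exact ⟨x1, hx1, by linarith [h2.1]⟩
  have hnotcover : ¬ (Icc (m 0) (M 0) ⊆ Aset ∪ Bset) := by
    intro hcover
    obtain ⟨s, _, hsA, hsB⟩ := isPreconnected_Icc Aset Bset hAopen hBopen hcover
      ⟨m 0, ⟨le_refl _, le_of_lt (hmM 0)⟩, hAmem⟩
      ⟨M 0, ⟨le_of_lt (hmM 0), le_refl _⟩, hBmem⟩
    exact hdisj s hsA hsB
  obtain ⟨sstar, hsIcc, hsnot⟩ := Set.not_subset.mp hnotcover
  have hnotA : sstar ∉ Aset := fun h => hsnot (Or.inl h)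
  have hnotB : sstar ∉ Bset := fun h => hsnot (Or.inr h)
  have hge : ∀ x, 0 ≤ x → m x ≤ g sstar x := by
    intro x hx
    by_contra h
    exact hnotA ⟨x, hx, by linarith⟩
  have hle : ∀ x, 0 ≤ x → g sstar x ≤ M x := by
    intro x hx
    by_contra h
    exact hnotB ⟨x, hx, by linarith⟩
  have hm0lt : m 0 < sstar := by
    rcases eq_or_lt_of_le hsIcc.1 with h | h
    · exact absurd (h ▸ hAmem) hnotA
    · exact h
  have hM0gt : sstar < M 0 := by
    rcases eq_or_lt_of_le hsIcc.2 with h | h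
    · exact absurd (h ▸ hBmem) hnotB
    · exact h
  have hmlt : ∀ x, m x < g sstar x := by
    intro x
    rcases lt_or_ge x 0 with hx | hx
    · have h0 : 0 < g sstar 0 - m 0 := by rw [hg0]; linarith
      have := back_pos (hdm sstar) (hzm sstar) (le_of_lt hx) h0
      linarith
    · rcases lt_or_eq_of_le (hge x hx) with h | h
      · exact h
      · exfalso
        have h0 : g sstar x - m x = 0 := by linarith
        obtain ⟨t, ht1, ht2, ht3⟩ := slope_right (hdm sstar x) h0 (hzm sstar x h0) zero_lt_one
        exact hnotA ⟨t, by linarith, by linarith⟩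
  have hMgt : ∀ x, g sstar x < M x := by
    intro x
    rcases lt_or_ge x 0 with hx | hx
    · have h0 : 0 < M 0 - g sstar 0 := by rw [hg0]; linarith
      have := back_pos (hdM sstar) (hzM sstar) (le_of_lt hx) h0
      linarith
    · rcases lt_or_eq_of_le (hle x hx) with h | h
      · exact h
      · exfalso
        have h0 : M x - g sstar x = 0 := by linarith
        obtain ⟨t, ht1, ht2, ht3⟩ := slope_right (hdM sstar x) h0 (hzM sstar x h0) zero_lt_one
        exact hnotB ⟨t, by linarith, by linarith⟩
  refine ⟨g sstar, fun x => G x (g sstar x), hgd sstar, ?_, ?_, fun x => ⟨hmlt x, hMgt x⟩⟩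
  · exact hG_cont.comp (continuous_id.prodMk (hgc sstar))
  · intro x
    have hcl : clampTo B' (g sstar x) = g sstar x := by
      apply clampTo_eq
      rw [abs_le]
      constructor
      · linarith [hmlt x, neg_abs_le (m x), hBm' x]
      · linarith [hMgt x, le_abs_self (M x), hBM' x]
    rw [hGdef]
    simp only
    rw [hcl]
    have hane : a x ≠ 0 := ne_of_gt (ha_pos x)
    field_simp
    ring
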